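/- Lemma 4.1(i): For every n ≥ 2, the fully invariant congruences θ_{A_n} = θ({xy ≈ yx, x^n ≈ 1}) and θ_{SL} = θ({xy ≈ yx, x ≈ x²}) on F = FreeMonoid ℕ do not permute: θ_{A_n} ∘ θ_{SL} ≠ θ_{SL} ∘ θ_{A_n}. -/

import Mathlib

/-! Common definitions: words, fully invariant congruences, identities and
named varieties from the paper. -/

/-- The free monoid over the countably infinite alphabet `ℕ`. -/
abbrev FM : Type := FreeMonoid ℕ

/-- The letters `x, y, z, s, t, h` (pairwise distinct elements of `ℕ`). -/
def xL : FM := FreeMonoid.of 0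
def yL : FM := FreeMonoid.of 1
def zL : FM := FreeMonoid.of 2
def sL : FM := FreeMonoid.of 3
def tL : FM := FreeMonoid.of 4
def hL : FM := FreeMonoid.of 5
/-- The indexed letters `z_i` and `t_i` (0-based; pairwise distinct, and distinct
from the named letters above). -/
def zV (i : ℕ) : FM := FreeMonoid.of (10 + 2 * i)
def tV (i : ℕ) : FM := FreeMonoid.of (11 + 2 * i)

/-- A congruence on the free monoid is fully invariant if it is stable under all
monoid endomorphisms. -/
def IsFullyInvariant (θ : Con FM) : Prop :=
  ∀ (σ : FM →* FM) (u v : FM), θ u v → θ (σ u) (σ v)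

/-- The smallest fully invariant congruence on `FM` containing a set of identities. -/
def fiCon (E : Set (FM × FM)) : Con FM :=
  sInf {c : Con FM | IsFullyInvariant c ∧ ∀ p ∈ E, c p.1 p.2}

/-- Two congruences (relations) permute: `α ∘ β = β ∘ α`. -/
def Permute (α β : Con FM) : Prop :=
  Relation.Comp (⇑α) (⇑β) = Relation.Comp (⇑β) (⇑α)

/-- A monoid `M` satisfies the identity `p.1 ≈ p.2`. -/
def MSatisfies (M : Type*) [Monoid M] (p : FM × FM) : Prop :=
  ∀ φ : FM →* M, φ p.1 = φ p.2

/-- A monoid `M` satisfies all identities of a congruence `θ`. -/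
def SatisfiesAll (θ : Con FM) (M : Type*) [Monoid M] : Prop :=
  ∀ u v : FM, θ u v → MSatisfies M (u, v)

/-- Every element of the monoid `M` has a two-sided inverse, i.e. `M` is a group. -/
def IsGroupMonoid (M : Type*) [Monoid M] : Prop :=
  ∀ m : M, ∃ m' : M, m * m' = 1 ∧ m' * m = 1

/-- The dual of a congruence: `θ^δ = {(rev u, rev v) : (u, v) ∈ θ}`. -/
def dualCon (θ : Con FM) : Con FM where
  r a b := θ a.reverse b.reverse
  iseqv := ⟨fun _ => θ.refl _, fun h => θ.symm h, fun h h' => θ.trans h h'⟩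
  mul' := fun {a b c d} h₁ h₂ => by
    show θ (a * c).reverse (b * d).reverse
    rw [FreeMonoid.reverse_mul, FreeMonoid.reverse_mul]
    exact θ.mul h₂ h₁

/-- σ1 : `xysxty ≈ yxsxty`. -/
def idσ1 : FM × FM := (xL*yL*sL*xL*tL*yL, yL*xL*sL*xL*tL*yL)
/-- σ2 : `xsytxy ≈ xsytyx`. -/
def idσ2 : FM × FM := (xL*sL*yL*tL*xL*yL, xL*sL*yL*tL*yL*xL)
/-- σ3 : `xsxyty ≈ xsyxty`. -/
def idσ3 : FM × FM := (xL*sL*xL*yL*tL*yL, xL*sL*yL*xL*tL*yL)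
/-- α1 : `xysxtxhy ≈ yxsxtxhy`. -/
def idα1 : FM × FM := (xL*yL*sL*xL*tL*xL*hL*yL, yL*xL*sL*xL*tL*xL*hL*yL)
/-- α2 : `xysxtyhx ≈ yxsxtyhx`. -/
def idα2 : FM × FM := (xL*yL*sL*xL*tL*yL*hL*xL, yL*xL*sL*xL*tL*yL*hL*xL)
/-- α3 : `xysytxhx ≈ yxsytxhx`. -/
def idα3 : FM × FM := (xL*yL*sL*yL*tL*xL*hL*xL, yL*xL*sL*yL*tL*xL*hL*xL)

/-- `aIdent i` is the identity `α_i` for `i ∈ {1, 2, 3}`. -/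
def aIdent (i : ℕ) : FM × FM := if i = 1 then idα1 else if i = 2 then idα2 else idα3
/-- `bIdent i` is `β_i`, obtained from `α_i` by reversing both sides. -/
def bIdent (i : ℕ) : FM × FM := ((aIdent i).1.reverse, (aIdent i).2.reverse)

/-- The ordered product `f 0 * f 1 * ⋯ * f (n-1)`. -/
def prodRange (n : ℕ) (f : ℕ → FM) : FM := ((List.range n).map f).prod
/-- The ordered product `f 0 * f 1 * ⋯ * f (n-1)` over `Fin n`. -/
def prodFin (n : ℕ) (f : Fin n → FM) : FM := ((List.finRange n).map f).prod

/-- The word `w_n[π,τ]` (0-based indices). -/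
def wWord (n : ℕ) (π τ : Equiv.Perm (Fin n)) : FM :=
  prodRange n (fun i => zV i * tV i) * xL *
    prodFin n (fun i => zV (π i) * zV (n + τ i)) * xL *
    prodRange n (fun i => tV (n + i) * zV (n + i))

/-- The word `w_n'[π,τ]`. -/
def wWord' (n : ℕ) (π τ : Equiv.Perm (Fin n)) : FM :=
  prodRange n (fun i => zV i * tV i) * (xL * xL) *
    prodFin n (fun i => zV (π i) * zV (n + τ i)) *
    prodRange n (fun i => tV (n + i) * zV (n + i))

/-- The word `c_{n,m}[ρ]`. -/
def cWord (n m : ℕ) (ρ : Equiv.Perm (Fin (n + m))) : FM :=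
  prodRange n (fun i => zV i * tV i) * (xL * yL) * tL *
    prodRange m (fun i => zV (n + i) * tV (n + i)) * xL *
    prodFin (n + m) (fun i => zV (ρ i)) * yL

/-- The word `c'_{n,m}[ρ]`. -/
def cWord' (n m : ℕ) (ρ : Equiv.Perm (Fin (n + m))) : FM :=
  prodRange n (fun i => zV i * tV i) * (yL * xL) * tL *
    prodRange m (fun i => zV (n + i) * tV (n + i)) * xL *
    prodFin (n + m) (fun i => zV (ρ i)) * yL

/-- The word `c_{n,m,k}[ρ]`. -/
def cWord3 (n m k : ℕ) (ρ : Equiv.Perm (Fin (n + m + k))) : FM :=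
  prodRange n (fun i => zV i * tV i) * (xL * yL) * tL *
    prodRange m (fun i => zV (n + i) * tV (n + i)) * xL *
    prodFin (n + m + k) (fun i => zV (ρ i)) * yL *
    prodRange k (fun i => tV (n + m + i) * zV (n + m + i))

/-- The word `c'_{n,m,k}[ρ]`. -/
def cWord3' (n m k : ℕ) (ρ : Equiv.Perm (Fin (n + m + k))) : FM :=
  prodRange n (fun i => zV i * tV i) * (yL * xL) * tL *
    prodRange m (fun i => zV (n + i) * tV (n + i)) * xL *
    prodFin (n + m + k) (fun i => zV (ρ i)) * yL *
    prodRange k (fun i => tV (n + m + i) * zV (n + m + i))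

/-- The equational theory of `D_∞`. -/
def θDinf : Con FM :=
  fiCon {(xL^2, xL^3), (xL^2 * yL, yL * xL^2), idσ1, idσ2, idσ3}
/-- The equational theory of `N`. -/
def θN : Con FM :=
  fiCon {(xL^2, xL^3), (xL^2 * yL, yL * xL^2), (xL*yL*xL*zL*xL, xL^2*yL*zL), idσ2, idσ3}
/-- The equational theory of `K`. -/
def θK : Con FM :=
  fiCon {(xL^2*yL, xL^2*yL*xL), (xL*yL*xL, xL*yL*xL^2), (xL^2*yL^2, yL^2*xL^2)}
/-- The identity basis of `P_n`. -/
def basisP (n : ℕ) : Set (FM × FM) :=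
  {(xL^n, xL^(n+1)), (xL^n * yL, yL * xL^n), (xL^2*yL, xL*yL*xL)}
/-- The equational theory of `P_n`. -/
def θP (n : ℕ) : Con FM := fiCon (basisP n)
/-- The equational theory of `R`. -/
def θR : Con FM :=
  fiCon ({(xL^2, xL^3), (xL^2*yL, yL*xL^2), idσ1, idσ2} ∪
    {p : FM × FM | ∃ (n : ℕ) (π τ : Equiv.Perm (Fin n)),
        1 ≤ n ∧ p = (wWord n π τ, wWord' n π τ)})
/-- The equational theory of `Q_{r,s}`. -/
def θQ (r s : ℕ) : Con FM :=
  fiCon ({(xL^2, xL^3), (xL^2*yL, yL*xL^2), idσ3} ∪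
    {p : FM × FM | ∃ i : ℕ, (i = 1 ∨ i = 2 ∨ i = 3) ∧ i ≠ r ∧ p = aIdent i} ∪
    {p : FM × FM | ∃ j : ℕ, (j = 1 ∨ j = 2 ∨ j = 3) ∧ j ≠ s ∧ p = bIdent j} ∪
    {p : FM × FM | ∃ (n m : ℕ) (ρ : Equiv.Perm (Fin (n + m))),
        p = (cWord n m ρ, cWord' n m ρ) ∨
        p = ((cWord n m ρ).reverse, (cWord' n m ρ).reverse)})
/-- The equational theory of the variety `SL` of semilattice monoids. -/
def θSL : Con FM := fiCon {(xL, xL^2), (xL*yL, yL*xL)}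

/-- `u` is a factor (contiguous subword) of `w`. -/
def IsFactor (u w : FM) : Prop := ∃ p q : FM, p * u * q = w

lemma isFactor_left {a b w : FM} (h : IsFactor (a * b) w) : IsFactor a w := by
  obtain ⟨p, q, hpq⟩ := h
  exact ⟨p, b * q, by rw [← hpq]; simp [mul_assoc]⟩

lemma isFactor_right {a b w : FM} (h : IsFactor (a * b) w) : IsFactor b w := by
  obtain ⟨p, q, hpq⟩ := h
  exact ⟨p * a, q, by rw [← hpq]; simp [mul_assoc]⟩

/-- The Rees congruence associated with the ideal of non-factors of `w`. -/
def reesCon (w : FM) : Con FM where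
  r u v := u = v ∨ (¬ IsFactor u w ∧ ¬ IsFactor v w)
  iseqv := by
    refine ⟨fun _ => Or.inl rfl, ?_, ?_⟩
    · intro a b h
      rcases h with rfl | ⟨h1, h2⟩
      · exact Or.inl rfl
      · exact Or.inr ⟨h2, h1⟩
    · intro a b c h h'
      rcases h with rfl | ⟨h1, h2⟩
      · exact h'
      · rcases h' with rfl | ⟨h3, h4⟩
        · exact Or.inr ⟨h1, h2⟩
        · exact Or.inr ⟨h1, h4⟩
  mul' := by
    rintro a b c d (rfl | ⟨h1, h2⟩) (rfl | ⟨h3, h4⟩)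
    · exact Or.inl rfl
    · exact Or.inr ⟨fun h => h3 (isFactor_right h), fun h => h4 (isFactor_right h)⟩
    · exact Or.inr ⟨fun h => h1 (isFactor_left h), fun h => h2 (isFactor_left h)⟩
    · exact Or.inr ⟨fun h => h1 (isFactor_left h), fun h => h2 (isFactor_left h)⟩

/-- The Rees quotient monoid `S(w)`. -/
abbrev SMon (w : FM) : Type := (reesCon w).Quotient

/-- The number of occurrences of the letter `a` in the word `w`. -/
def occ (w : FM) (a : ℕ) : ℕ := (FreeMonoid.toList w).count a

/-- A word in which every letter occurs at most once. -/
def LinearW (w : FM) : Prop := ∀ a : ℕ, occ w a ≤ 1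

/-- Assemble the word `b0 * t_1 * b_1 * ⋯ * t_m * b_m` from a first block and a list
of (simple letter, block) pairs. -/
def assemble (b0 : FM) (rest : List (ℕ × FM)) : FM :=
  b0 * (rest.map (fun p => FreeMonoid.of p.1 * p.2)).prod

/-- `(b0, rest)` is the decomposition of `w` into alternating simple letters and blocks
consisting of multiple letters. -/
def IsDecomposition (w : FM) (b0 : FM) (rest : List (ℕ × FM)) : Prop :=
  w = assemble b0 rest ∧
  (∀ p ∈ rest, occ w p.1 = 1) ∧
  (∀ a ∈ FreeMonoid.toList b0, 2 ≤ occ w a) ∧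
  (∀ p ∈ rest, ∀ a ∈ FreeMonoid.toList p.2, 2 ≤ occ w a)

/-- The identity `u ≈ v` is linear-balanced. -/
def LinearBalanced (u v : FM) : Prop :=
  ∃ (b0 c0 : FM) (urest vrest : List (ℕ × FM)),
    IsDecomposition u b0 urest ∧ IsDecomposition v c0 vrest ∧
    urest.map Prod.fst = vrest.map Prod.fst ∧
    ∀ a : ℕ, (2 ≤ occ u a ∨ 2 ≤ occ v a) →
      occ b0 a = occ c0 a ∧ occ b0 a ≤ 1 ∧
      ∀ q ∈ urest.zip vrest, occ q.1.2 a = occ q.2.2 a ∧ occ q.1.2 a ≤ 1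

/-- `w` is an isoterm for `θ`. -/
def IsIsoterm (θ : Con FM) (w : FM) : Prop := ∀ w' : FM, θ w w' → w' = w

/-- The equational theory of the variety `A_n` of abelian groups of exponent `n`. -/
def θAb (n : ℕ) : Con FM := fiCon {(xL * yL, yL * xL), (xL ^ n, 1)}


section LemmaAux

lemma occ_mul' (u v : FM) (a : ℕ) : occ (u*v) a = occ u a + occ v a := by
  simp [occ, FreeMonoid.toList_mul, List.count_append]

lemma occ_endo (σ : FM →* FM) (u : FM) (a : ℕ) :
    occ (σ u) a = ((FreeMonoid.toList u).map (fun b => occ (σ (FreeMonoid.of b)) a)).sum := by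
  induction u using FreeMonoid.inductionOn' with
  | one => simp [occ]
  | of_mul b xs ih =>
      rw [map_mul, occ_mul', ih]
      rfl

lemma mem_endo (σ : FM →* FM) (u : FM) (a : ℕ) :
    a ∈ FreeMonoid.toList (σ u) ↔
      ∃ b ∈ FreeMonoid.toList u, a ∈ FreeMonoid.toList (σ (FreeMonoid.of b)) := by
  induction u using FreeMonoid.inductionOn' with
  | one => simp
  | of_mul b xs ih =>
      rw [map_mul, FreeMonoid.toList_mul, List.mem_append, ih]
      show _ ↔ ∃ c ∈ FreeMonoid.toList (FreeMonoid.of b * xs), _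
      simp only [FreeMonoid.toList_mul, FreeMonoid.toList_of, List.mem_append,
        List.mem_singleton, exists_eq_or_imp]

lemma occ_pow (u : FM) (k : ℕ) (a : ℕ) : occ (u^k) a = k * occ u a := by
  induction k with
  | zero => simp [occ]
  | succ k ih => rw [pow_succ, occ_mul', ih]; ring

/-- The content congruence: two words are related iff they contain the same letters. -/
def conSL : Con FM where
  r u v := ∀ a, a ∈ FreeMonoid.toList u ↔ a ∈ FreeMonoid.toList v
  iseqv := ⟨fun _ _ => Iff.rfl, fun h a => (h a).symm, fun h h' a => (h a).trans (h' a)⟩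
  mul' := fun {a b c d} h₁ h₂ x => by
    simp only [FreeMonoid.toList_mul, List.mem_append]
    exact or_congr (h₁ x) (h₂ x)

lemma conSL_fi : IsFullyInvariant conSL := by
  intro σ u v h a
  rw [mem_endo, mem_endo]
  exact exists_congr fun b => and_congr_left fun _ => h b

/-- The mod-`n` letter-count congruence. -/
def conAb (n : ℕ) : Con FM where
  r u v := ∀ a, (occ u a : ZMod n) = occ v a
  iseqv := ⟨fun _ _ => rfl, fun h a => (h a).symm, fun h h' a => (h a).trans (h' a)⟩
  mul' := fun {a b c d} h₁ h₂ x => by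
    rw [occ_mul', occ_mul']; push_cast; rw [h₁ x, h₂ x]

lemma conAb_fi (n : ℕ) : IsFullyInvariant (conAb n) := by
  intro σ u v h a
  set S := (FreeMonoid.toList u).toFinset ∪ (FreeMonoid.toList v).toFinset with hS
  have key : ∀ w : FM, (FreeMonoid.toList w).toFinset ⊆ S → ((occ (σ w) a : ZMod n)) =
      ∑ b ∈ S, (occ w b : ZMod n) * (occ (σ (FreeMonoid.of b)) a : ZMod n) := by
    intro w hw
    rw [occ_endo, Nat.cast_list_sum, List.map_map]
    have : (FreeMonoid.toList w).map ((Nat.cast : ℕ → ZMod n) ∘ fun b => occ (σ (FreeMonoid.of b)) a)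
        = (FreeMonoid.toList w).map fun b => ((occ (σ (FreeMonoid.of b)) a : ZMod n)) := rfl
    rw [this, Finset.sum_list_map_count, Finset.sum_subset hw]
    · apply Finset.sum_congr rfl
      intro b _
      rw [nsmul_eq_mul]; rfl
    · intro b _ hb
      simp only [List.mem_toFinset] at hb
      rw [List.count_eq_zero_of_not_mem hb]
      simp
  rw [key u Finset.subset_union_left, key v Finset.subset_union_right]
  exact Finset.sum_congr rfl fun b _ => by rw [h b]

end LemmaAux

/-- **Lemma 4.1(i).** For `n ≥ 2`, the congruences `θ_{A_n}` and `θ_{SL}` do not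
permute. -/
theorem theta_Abn_SL_not_permute (n : ℕ) (hn : 2 ≤ n) :
    Relation.Comp (⇑(θAb n)) (⇑θSL) ≠ Relation.Comp (⇑θSL) (⇑(θAb n)) := by
  haveI : Fact (1 < n) := ⟨hn⟩
  -- membership of the bounding congruences in the defining sets
  have hSLmem : conSL ∈ {c : Con FM | IsFullyInvariant c ∧
      ∀ p ∈ ({(xL, xL^2), (xL*yL, yL*xL)} : Set (FM × FM)), c p.1 p.2} := by
    refine ⟨conSL_fi, ?_⟩
    rintro p (rfl | rfl) <;> intro a <;>
      simp [xL, yL, pow_two, FreeMonoid.toList_mul, FreeMonoid.toList_of, or_comm]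
  have hAbmem : conAb n ∈ {c : Con FM | IsFullyInvariant c ∧
      ∀ p ∈ ({(xL * yL, yL * xL), (xL ^ n, 1)} : Set (FM × FM)), c p.1 p.2} := by
    refine ⟨conAb_fi n, ?_⟩
    rintro p (rfl | rfl) <;> intro a
    · rw [occ_mul', occ_mul']; push_cast; ring
    · rw [occ_pow]
      show ((n * occ xL a : ℕ) : ZMod n) = ((occ 1 a : ℕ) : ZMod n)
      have h0 : occ (1 : FM) a = 0 := by simp [occ]
      rw [h0]
      push_cast
      simp [ZMod.natCast_self]
  have hSLle : θSL ≤ conSL := sInf_le hSLmem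
  have hAble : θAb n ≤ conAb n := sInf_le hAbmem
  -- generators belong to the fully invariant congruences they generate
  have hgenAb : θAb n (xL ^ n) 1 := fun c hc => hc.2 (xL ^ n, 1) (Or.inr rfl)
  have hgenSL : θSL xL (xL ^ 2) := fun c hc => hc.2 (xL, xL ^ 2) (Or.inl rfl)
  -- x ≈ x^k in θSL for k ≥ 1
  have hSLpow : ∀ k, 1 ≤ k → θSL xL (xL ^ k) := by
    intro k hk
    induction k with
    | zero => omega
    | succ k ih =>
      rcases Nat.eq_or_lt_of_le hk with h | h
      · rw [← h, pow_one]
        exact θSL.refl xL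
      · have ih' := ih (by omega)
        have hmul : θSL (xL * xL) (xL ^ k * xL) := θSL.mul ih' (θSL.refl xL)
        rw [← pow_two] at hmul
        rw [pow_succ]
        exact θSL.trans hgenSL hmul
  intro heq
  have lhs : Relation.Comp (⇑(θAb n)) (⇑θSL) 1 xL :=
    ⟨xL ^ n, (θAb n).symm hgenAb, θSL.symm (hSLpow n (by omega))⟩
  rw [heq] at lhs
  obtain ⟨v, hv1, hv2⟩ := lhs
  have h1 : conSL 1 v := hSLle hv1
  have hv : v = 1 := by
    have hnil : FreeMonoid.toList v = [] := by
      rw [List.eq_nil_iff_forall_not_mem]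
      intro a ha
      have := (h1 a).mpr ha
      simp at this
    exact FreeMonoid.toList.injective hnil
  rw [hv] at hv2
  have h2 : conAb n 1 xL := hAble hv2
  have h3 := h2 0
  have hocc1 : occ (1 : FM) 0 = 0 := by simp [occ]
  have hoccx : occ xL 0 = 1 := by simp [occ, xL, FreeMonoid.toList_of]
  rw [hocc1, hoccx] at h3
  simp only [Nat.cast_zero, Nat.cast_one] at h3
  exact zero_ne_one h3
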